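/- Fix integers β ≥ 1 and n, and reals p ∈ (0,1], q ∈ [p,1] such that pn/q and tpn/β (for t = 0,…,β) are integers with βpn/β ≤ pn/q. Fix a subset U ⊆ [n] with |U| = pn/q. Suppose that for each t = 0,…,β, z^t ∈ {0,1}^n is a random vector whose support of 1-entries is a uniformly random subset of U of size tpn/β (units outside U are always untreated; the joint coupling of z^0,…,z^β may be arbitrary). Then E[ TTE-hat ] = (q/(np)) Σ_{i=1}^{n} Σ_{∅ ≠ S ⊆ N_i, |S| ≤ β} c_{i,S} · 1(S ⊆ U). -/

import Mathlib

open Finset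

section Aux
open Polynomial

lemma lagrange_eval (β : ℕ) (x : ℝ) (f : ℝ[X]) (hf : f.degree < (β+1 : ℕ)) :
    ∑ t ∈ Finset.range (β+1),
      (∏ s ∈ (Finset.range (β+1)).erase t, ((x - (s:ℝ))/((t:ℝ)-(s:ℝ)))) * f.eval (t:ℝ)
      = f.eval x := by
  have hinj : Set.InjOn (fun i : ℕ => (i:ℝ)) (Finset.range (β+1)) :=
    fun a _ b _ h => Nat.cast_injective h
  have hcard : f.degree < ((Finset.range (β+1)).card : ℕ) := by simpa using hf
  conv_rhs => rw [Lagrange.eq_interpolate hinj hcard]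
  rw [Lagrange.interpolate_apply, eval_finset_sum]
  refine (Finset.sum_congr rfl fun t ht => ?_).symm
  rw [eval_mul, eval_C, mul_comm]
  congr 1
  rw [Lagrange.basis, eval_prod]
  refine Finset.prod_congr rfl fun s hs => ?_
  rw [Lagrange.basisDivisor, eval_mul, eval_C, eval_sub, eval_X, eval_C, div_eq_inv_mul]

lemma ratio (u mt k : ℕ) (hk : k ≤ mt) (hmu : mt ≤ u) :
    ((u - k).choose (mt - k) : ℝ) * (1 / (u.choose mt : ℝ)) =
    ∏ r ∈ Finset.range k, (((mt:ℝ) - r) / ((u:ℝ) - r)) := by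
  have hku : k ≤ u := hk.trans hmu
  have h1 : (∏ r ∈ Finset.range k, ((mt:ℝ) - r)) = (mt.descFactorial k : ℝ) := by
    rw [Nat.descFactorial_eq_prod_range, Nat.cast_prod]
    exact Finset.prod_congr rfl fun r hr => by
      rw [Nat.cast_sub (le_of_lt (lt_of_lt_of_le (Finset.mem_range.mp hr) hk))]
  have h2 : (∏ r ∈ Finset.range k, ((u:ℝ) - r)) = (u.descFactorial k : ℝ) := by
    rw [Nat.descFactorial_eq_prod_range, Nat.cast_prod]
    exact Finset.prod_congr rfl fun r hr => by
      rw [Nat.cast_sub (le_of_lt (lt_of_lt_of_le (Finset.mem_range.mp hr) hku))]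
  rw [Finset.prod_div_distrib, h1, h2]
  have hcp : (0:ℝ) < (u.choose mt : ℝ) := by exact_mod_cast Nat.choose_pos hmu
  have hdp : (0:ℝ) < (u.descFactorial k : ℝ) := by
    have : u.descFactorial k ≠ 0 := by
      rw [Ne, Nat.descFactorial_eq_zero_iff_lt]; omega
    exact_mod_cast Nat.pos_of_ne_zero this
  have key : (u - k).choose (mt - k) * u.descFactorial k = mt.descFactorial k * u.choose mt := by
    rw [Nat.descFactorial_eq_factorial_mul_choose, Nat.descFactorial_eq_factorial_mul_choose]
    have h := Nat.choose_mul (n := u) hk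
    calc (u-k).choose (mt-k) * (Nat.factorial k * u.choose k)
        = Nat.factorial k * (u.choose k * (u-k).choose (mt-k)) := by ring
      _ = Nat.factorial k * (u.choose mt * mt.choose k) := by rw [← h]
      _ = (Nat.factorial k * mt.choose k) * u.choose mt := by ring
  rw [mul_one_div, div_eq_div_iff hcp.ne' hdp.ne']
  exact_mod_cast key

lemma count_superset {α : Type*} [DecidableEq α] (U S : Finset α) (hSU : S ⊆ U) (mt : ℕ)
    (h : S.card ≤ mt) :
    ((U.powersetCard mt).filter (fun A => S ⊆ A)).card = (U.card - S.card).choose (mt - S.card) := by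
  rw [← Finset.card_sdiff_of_subset hSU, ← Finset.card_powersetCard]
  apply Finset.card_bij' (fun A _ => A \ S) (fun B _ => B ∪ S)
  · intro A hA
    rw [Finset.mem_filter, Finset.mem_powersetCard] at hA
    obtain ⟨⟨hAU, hAc⟩, hSA⟩ := hA
    rw [Finset.mem_powersetCard]
    exact ⟨Finset.sdiff_subset_sdiff hAU (le_refl S), by rw [Finset.card_sdiff_of_subset hSA, hAc]⟩
  · intro B hB
    rw [Finset.mem_powersetCard] at hB
    obtain ⟨hBU, hBc⟩ := hB
    have hdisj : Disjoint B S := Finset.disjoint_of_subset_left hBU (Finset.sdiff_disjoint)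
    rw [Finset.mem_filter, Finset.mem_powersetCard]
    refine ⟨⟨Finset.union_subset (hBU.trans (Finset.sdiff_subset)) hSU, ?_⟩,
      Finset.subset_union_right⟩
    rw [Finset.card_union_of_disjoint hdisj, hBc]
    omega
  · intro A hA
    rw [Finset.mem_filter] at hA
    exact Finset.sdiff_union_of_subset hA.2
  · intro B hB
    rw [Finset.mem_powersetCard] at hB
    exact Finset.union_sdiff_cancel_right
      (Finset.disjoint_of_subset_left hB.1 (Finset.sdiff_disjoint))

lemma wsum_swap' {Ω ι : Type*} [Fintype Ω] (w : Ω → ℝ) (s : Finset ι) (f : ι → Ω → ℝ) :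
    (∑ ω, w ω * ∑ i ∈ s, f i ω) = ∑ i ∈ s, ∑ ω, w ω * f i ω := by
  simp_rw [Finset.mul_sum]
  exact Finset.sum_comm

lemma wpull {Ω : Type*} [Fintype Ω] (w : Ω → ℝ) (a : ℝ) (g : Ω → ℝ) :
    (∑ ω, w ω * (a * g ω)) = a * ∑ ω, w ω * g ω := by
  rw [Finset.mul_sum]
  exact Finset.sum_congr rfl fun ω _ => by ring


end Aux

/-- The Lagrange rollout coefficients
`h_{t,q} = ∏_{s=0,s≠t}^{β} ((β/q − s)/(t − s)) − ∏_{s=0,s≠t}^{β} ((−s)/(t − s))`. -/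
noncomputable def hcoef (β : ℕ) (q : ℝ) (t : ℕ) : ℝ :=
  (∏ s ∈ (Finset.range (β + 1)).erase t, (((β : ℝ) / q - (s : ℝ)) / ((t : ℝ) - (s : ℝ)))) -
  (∏ s ∈ (Finset.range (β + 1)).erase t, ((-(s : ℝ)) / ((t : ℝ) - (s : ℝ))))

/-- conditional expectation of the two-stage estimator given a fixed Stage 1
set `U ⊆ [n]` with `|U| = pn/q`, where at each time `t = 0,…,β` the treated set `Z t` is a
uniformly random subset of `U` of size `tpn/β` (units outside `U` untreated; arbitrary
joint coupling across `t`, modeled by an arbitrary finite probability space `(Ω, w)`).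
Then `E[TTE-hat] = (q/(np)) Σ_i Σ_{∅ ≠ S ⊆ N_i, |S| ≤ β} c_{i,S} · 1(S ⊆ U)`. -/
theorem stmt_7 (β n : ℕ) (hβ : 1 ≤ β)
    (p q : ℝ) (hp0 : 0 < p) (hp1 : p ≤ 1) (hpq : p ≤ q) (hq1 : q ≤ 1)
    (Nbhd : Fin n → Finset (Fin n)) (c : Fin n → Finset (Fin n) → ℝ)
    (U : Finset (Fin n)) (hU : (U.card : ℝ) = p * (n : ℝ) / q)
    (m : ℕ → ℕ) (hm : ∀ t, t ≤ β → (m t : ℝ) = (t : ℝ) * p * (n : ℝ) / (β : ℝ))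
    (hmU : m β ≤ U.card)
    (Ω : Type) [Fintype Ω]
    (w : Ω → ℝ) (hw0 : ∀ ω, 0 ≤ w ω) (hw1 : ∑ ω, w ω = 1)
    (Z : ℕ → Ω → Finset (Fin n))
    (hZU : ∀ t, t ≤ β → ∀ ω, Z t ω ⊆ U)
    (hZcard : ∀ t, t ≤ β → ∀ ω, (Z t ω).card = m t)
    (hZunif : ∀ t, t ≤ β → ∀ A : Finset (Fin n), A ⊆ U → A.card = m t →
      (∑ ω ∈ Finset.univ.filter (fun ω => Z t ω = A), w ω) = 1 / (U.card.choose (m t) : ℝ)) :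
    (∑ ω, w ω * ((q / ((n : ℝ) * p)) * ∑ t ∈ Finset.range (β + 1), hcoef β q t *
        ∑ i, ∑ S ∈ (Nbhd i).powerset.filter (fun S => S.card ≤ β),
          c i S * ∏ j ∈ S, (if j ∈ Z t ω then (1 : ℝ) else 0))) =
      (q / ((n : ℝ) * p)) *
        ∑ i, ∑ S ∈ (Nbhd i).powerset.filter (fun S => S.Nonempty ∧ S.card ≤ β),
          c i S * (if S ⊆ U then (1 : ℝ) else 0) := by
  have hβ0 : (β:ℝ) ≠ 0 := Nat.cast_ne_zero.mpr (by omega)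
  have hq0 : q ≠ 0 := ne_of_gt (lt_of_lt_of_le hp0 hpq)
  have hpn0 : (0:ℝ) ≤ p * n := by positivity
  -- m is monotone up to β, so m t ≤ |U|
  have hmle : ∀ t, t ≤ β → m t ≤ U.card := by
    intro t ht
    refine le_trans ?_ hmU
    have h1 : (m t:ℝ) ≤ (m β:ℝ) := by
      rw [hm t ht, hm β le_rfl]
      gcongr
    exact_mod_cast h1
  -- Step 1: expectation of the indicator product
  have hE : ∀ t, t ≤ β → ∀ S : Finset (Fin n), S ⊆ U →
      (∑ ω, w ω * ∏ j ∈ S, (if j ∈ Z t ω then (1:ℝ) else 0)) =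
      ∏ r ∈ Finset.range S.card, (((m t : ℝ) - r) / ((U.card : ℝ) - r)) := by
    intro t ht S hSU
    have hprod : ∀ ω, (∏ j ∈ S, (if j ∈ Z t ω then (1:ℝ) else 0)) =
        (if S ⊆ Z t ω then (1:ℝ) else 0) := by
      intro ω
      rw [Finset.prod_boole]
      congr 1
    simp_rw [hprod]
    have hmap : ∀ ω ∈ (Finset.univ : Finset Ω), Z t ω ∈ U.powersetCard (m t) := fun ω _ =>
      Finset.mem_powersetCard.mpr ⟨hZU t ht ω, hZcard t ht ω⟩
    rw [← Finset.sum_fiberwise_of_maps_to hmap]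
    have hinner : ∀ A ∈ U.powersetCard (m t),
        (∑ ω ∈ Finset.univ.filter (fun ω => Z t ω = A), w ω * (if S ⊆ Z t ω then (1:ℝ) else 0))
        = (if S ⊆ A then (1:ℝ) else 0) * (1 / (U.card.choose (m t) : ℝ)) := by
      intro A hA
      obtain ⟨hAU, hAc⟩ := Finset.mem_powersetCard.mp hA
      calc (∑ ω ∈ Finset.univ.filter (fun ω => Z t ω = A), w ω * (if S ⊆ Z t ω then (1:ℝ) else 0))
          = ∑ ω ∈ Finset.univ.filter (fun ω => Z t ω = A), (if S ⊆ A then (1:ℝ) else 0) * w ω := by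
            refine Finset.sum_congr rfl fun ω hω => ?_
            rw [(Finset.mem_filter.mp hω).2, mul_comm]
        _ = (if S ⊆ A then (1:ℝ) else 0) * (1 / (U.card.choose (m t) : ℝ)) := by
            rw [← Finset.mul_sum, hZunif t ht A hAU hAc]
    rw [Finset.sum_congr rfl hinner, ← Finset.sum_mul, Finset.sum_boole]
    by_cases hkm : S.card ≤ m t
    · rw [count_superset U S hSU (m t) hkm]
      exact ratio U.card (m t) S.card hkm (hmle t ht)
    · push_neg at hkm
      have hz : ((U.powersetCard (m t)).filter (fun A => S ⊆ A)) = ∅ := by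
        refine Finset.filter_eq_empty_iff.mpr fun A hA => ?_
        obtain ⟨hAU, hAc⟩ := Finset.mem_powersetCard.mp hA
        intro hSA
        exact absurd (Finset.card_le_card hSA) (by omega)
      rw [hz]
      rw [Finset.prod_eq_zero (Finset.mem_range.mpr hkm)]
      · simp
      · rw [sub_self, zero_div]
  -- Step 2: key per-S identity
  have key : ∀ S : Finset (Fin n), S.card ≤ β →
      (∑ t ∈ Finset.range (β+1), hcoef β q t *
        ∑ ω, w ω * ∏ j ∈ S, (if j ∈ Z t ω then (1:ℝ) else 0))
      = if S.Nonempty ∧ S ⊆ U then 1 else 0 := by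
    intro S hSβ
    by_cases hSU : S ⊆ U
    · -- main case
      have hkU : S.card ≤ U.card := Finset.card_le_card hSU
      set P : Polynomial ℝ := ∏ r ∈ Finset.range S.card,
        ((Polynomial.C (p*(n:ℝ)/(β:ℝ)) * Polynomial.X - Polynomial.C (r:ℝ)) *
          Polynomial.C (((U.card:ℝ) - r)⁻¹)) with hPdef
      have hPnd : P.natDegree ≤ S.card := by
        refine le_trans (Polynomial.natDegree_prod_le _ _) ?_
        calc ∑ r ∈ Finset.range S.card,
              ((Polynomial.C (p*(n:ℝ)/(β:ℝ)) * Polynomial.X - Polynomial.C (r:ℝ)) *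
                Polynomial.C (((U.card:ℝ) - r)⁻¹)).natDegree
            ≤ ∑ _r ∈ Finset.range S.card, 1 := by
              refine Finset.sum_le_sum fun r _ => ?_
              refine le_trans (Polynomial.natDegree_mul_le) ?_
              rw [Polynomial.natDegree_C, add_zero]
              refine le_trans (Polynomial.natDegree_sub_le _ _) ?_
              rw [Polynomial.natDegree_C]
              simpa using Polynomial.natDegree_C_mul_le (p*(n:ℝ)/(β:ℝ)) Polynomial.X
          _ = S.card := by simp
      have hPdeg : P.degree < ((β+1 : ℕ) : WithBot ℕ) := by
        refine lt_of_le_of_lt Polynomial.degree_le_natDegree ?_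
        exact_mod_cast Nat.lt_succ_of_le (hPnd.trans hSβ)
      have hPeval : ∀ x : ℝ, P.eval x =
          ∏ r ∈ Finset.range S.card, ((p*(n:ℝ)/(β:ℝ))*x - r) * (((U.card:ℝ)) - r)⁻¹ := by
        intro x
        rw [hPdef, Polynomial.eval_prod]
        exact Finset.prod_congr rfl fun r _ => by simp
      -- rewrite E-values as polynomial evals
      have hrw : ∀ t ∈ Finset.range (β+1),
          hcoef β q t * (∑ ω, w ω * ∏ j ∈ S, (if j ∈ Z t ω then (1:ℝ) else 0))
          = hcoef β q t * P.eval (t:ℝ) := by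
        intro t ht
        have htβ : t ≤ β := Nat.lt_succ_iff.mp (Finset.mem_range.mp ht)
        rw [hE t htβ S hSU, hPeval]
        congr 1
        refine Finset.prod_congr rfl fun r _ => ?_
        rw [div_eq_mul_inv]
        congr 2
        rw [hm t htβ]
        ring
      rw [Finset.sum_congr rfl hrw]
      -- Lagrange
      have L1 := lagrange_eval β ((β:ℝ)/q) P hPdeg
      have L0 := lagrange_eval β 0 P hPdeg
      simp only [zero_sub] at L0
      have hsum : ∑ t ∈ Finset.range (β+1), hcoef β q t * P.eval (t:ℝ)
          = P.eval ((β:ℝ)/q) - P.eval 0 := by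
        rw [← L1, ← L0, ← Finset.sum_sub_distrib]
        exact Finset.sum_congr rfl fun t _ => by rw [hcoef, sub_mul]
      rw [hsum]
      have hP1 : P.eval ((β:ℝ)/q) = 1 := by
        rw [hPeval]
        refine Finset.prod_eq_one fun r hr => ?_
        have hru : (r:ℝ) < (U.card:ℝ) := by
          exact_mod_cast lt_of_lt_of_le (Finset.mem_range.mp hr) hkU
        have : (p*(n:ℝ)/(β:ℝ))*((β:ℝ)/q) = (U.card:ℝ) := by
          rw [hU]; field_simp
        rw [this]
        exact mul_inv_cancel₀ (by linarith)
      have hP0 : P.eval 0 = if S.Nonempty then 0 else 1 := by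
        rw [hPeval]
        by_cases hS : S.Nonempty
        · rw [if_pos hS]
          refine Finset.prod_eq_zero (Finset.mem_range.mpr (Finset.card_pos.mpr hS)) ?_
          simp
        · rw [if_neg hS]
          have : S.card = 0 := by
            rw [Finset.card_eq_zero]
            exact Finset.not_nonempty_iff_eq_empty.mp hS
          rw [this]
          simp
      rw [hP1, hP0]
      by_cases hS : S.Nonempty
      · rw [if_pos hS, if_pos ⟨hS, hSU⟩]; ring
      · rw [if_neg hS, if_neg (fun h => hS h.1)]; ring
    · -- S ⊄ U
      rw [if_neg (fun h => hSU h.2)]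
      refine Finset.sum_eq_zero fun t ht => ?_
      have htβ : t ≤ β := Nat.lt_succ_iff.mp (Finset.mem_range.mp ht)
      have : (∑ ω, w ω * ∏ j ∈ S, (if j ∈ Z t ω then (1:ℝ) else 0)) = 0 := by
        refine Finset.sum_eq_zero fun ω _ => ?_
        have : (∏ j ∈ S, (if j ∈ Z t ω then (1:ℝ) else 0)) = 0 := by
          rw [Finset.prod_boole, if_neg]
          intro h
          exact hSU (fun x hx => hZU t htβ ω (h x hx))
        rw [this, mul_zero]
      rw [this, mul_zero]
  -- Step 3: reorganize sums
  have reorg : (∑ ω, w ω * ((q / ((n : ℝ) * p)) * ∑ t ∈ Finset.range (β + 1), hcoef β q t *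
        ∑ i, ∑ S ∈ (Nbhd i).powerset.filter (fun S => S.card ≤ β),
          c i S * ∏ j ∈ S, (if j ∈ Z t ω then (1 : ℝ) else 0)))
      = (q / ((n : ℝ) * p)) * ∑ i, ∑ S ∈ (Nbhd i).powerset.filter (fun S => S.card ≤ β),
          c i S * ∑ t ∈ Finset.range (β + 1), hcoef β q t *
            ∑ ω, w ω * ∏ j ∈ S, (if j ∈ Z t ω then (1 : ℝ) else 0) := by
    simp only [wpull, wsum_swap']
    congr 1
    simp_rw [Finset.mul_sum]
    rw [Finset.sum_comm]
    refine Finset.sum_congr rfl fun i _ => ?_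
    rw [Finset.sum_comm]
    refine Finset.sum_congr rfl fun S _ => ?_
    refine Finset.sum_congr rfl fun t _ => ?_
    refine Finset.sum_congr rfl fun ω _ => ?_
    ring
  rw [reorg]
  congr 1
  refine Finset.sum_congr rfl fun i _ => ?_
  rw [Finset.sum_filter, Finset.sum_filter]
  refine Finset.sum_congr rfl fun S _ => ?_
  by_cases hSβ : S.card ≤ β
  · rw [if_pos hSβ, key S hSβ]
    by_cases hN : S.Nonempty
    · simp [hN, hSβ]
    · simp [hN]
  · rw [if_neg hSβ, if_neg (fun h => hSβ h.2)]
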